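/- Let H be a cocommutative bialgebra over a commutative ring R, F a Drinfel'd twist on H with R-matrix ℛ := F₂₁ · F⁻¹ and ℛ⁻¹ = τ(ℛ) = Σ_k R_k ⊗ R^k, and let L be a Lie algebra in H-modules equipped with an H-invariant R-bilinear form b : L × L → R (Σ b(ρ(h₍₁₎)(v), ρ(h₍₂₎)(w)) = ε(h) · b(v, w)) which is cyclic with respect to the bracket: b(v₀, ⁅v₁, v₂⁆) = b(v₂, ⁅v₀, v₁⁆). Assume the twist F is compatible with the pairing, i.e. the twisted pairing ⟨v, w⟩_⋆ := Σ_k b(f̄^k(v), f̄_k(w)) satisfies ⟨v, w⟩_⋆ = Σ_k ⟨R^k(v), R_k(w)⟩_⋆ for all v, w ∈ L. Then the twisted pairing is strictly cyclic with respect to the twisted bracket [x, y]_⋆ := Σ_k ⁅f̄^k(x), f̄_k(y)⁆: for all v₀, v₁, v₂ ∈ L, ⟨v₀, [v₁, v₂]_⋆⟩_⋆ = ⟨v₂, [v₀, v₁]_⋆⟩_⋆. -/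

import Mathlib

open scoped TensorProduct

noncomputable section

/-- `Δ ⊗ id` as an algebra homomorphism `H ⊗ H → (H ⊗ H) ⊗ H`. -/
def comulTensorId (R H : Type*) [CommRing R] [Ring H] [Bialgebra R H] :
    (H ⊗[R] H) →ₐ[R] (H ⊗[R] H) ⊗[R] H :=
  Algebra.TensorProduct.map (Bialgebra.comulAlgHom R H) (AlgHom.id R H)

/-- `id ⊗ Δ` as an algebra homomorphism `H ⊗ H → H ⊗ (H ⊗ H)`. -/
def idTensorComul (R H : Type*) [CommRing R] [Ring H] [Bialgebra R H] :
    (H ⊗[R] H) →ₐ[R] H ⊗[R] (H ⊗[R] H) :=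
  Algebra.TensorProduct.map (AlgHom.id R H) (Bialgebra.comulAlgHom R H)

/-- `F` is a Drinfel'd twist on the bialgebra `H` with two-sided inverse `Finv`:
it is invertible and satisfies the 2-cocycle condition
`(F ⊗ 1) · (Δ ⊗ id)(F) = (1 ⊗ F) · (id ⊗ Δ)(F)` in `H ⊗ H ⊗ H`. -/
def IsDrinfeldTwist (R : Type*) {H : Type*} [CommRing R] [Ring H] [Bialgebra R H]
    (F Finv : H ⊗[R] H) : Prop :=
  F * Finv = 1 ∧ Finv * F = 1 ∧
    (TensorProduct.assoc R H H H) ((F ⊗ₜ[R] (1 : H)) * comulTensorId R H F) =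
      ((1 : H) ⊗ₜ[R] F) * idTensorComul R H F

/-- The `R`-matrix `ℛ := F₂₁ · F⁻¹` associated to a Drinfel'd twist, where
`F₂₁ = τ(F)` and `τ` is the flip of `H ⊗ H`. -/
def Rmat (R : Type*) {H : Type*} [CommRing R] [Ring H] [Bialgebra R H]
    (F Finv : H ⊗[R] H) : H ⊗[R] H :=
  (Algebra.TensorProduct.comm R H H) F * Finv

/-- The bialgebra `H` is cocommutative: `τ ∘ Δ = Δ`. -/
def IsCocommutative (R : Type*) (H : Type*) [CommRing R] [Ring H] [Bialgebra R H] : Prop :=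
  ∀ x : H, (Algebra.TensorProduct.comm R H H) (Coalgebra.comul (R := R) x) =
    Coalgebra.comul (R := R) x

/-- The action of an element of `H ⊗ H` on `M ⊗ N`, acting with the first leg on `M`
and the second leg on `N` through the given representations. -/
def legAct {R H : Type*} [CommRing R] [Ring H] [Algebra R H]
    {M N : Type*} [AddCommGroup M] [Module R M] [AddCommGroup N] [Module R N]
    (ρM : H →ₐ[R] Module.End R M) (ρN : H →ₐ[R] Module.End R N) :
    H ⊗[R] H →ₗ[R] (M ⊗[R] N →ₗ[R] M ⊗[R] N) :=
  (TensorProduct.homTensorHomMap (RingHom.id R) M N M N).comp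
    (TensorProduct.map ρM.toLinearMap ρN.toLinearMap)

/-- The Lie bracket of `L` as an `R`-bilinear map. -/
def lieBil (R L : Type*) [CommRing R] [LieRing L] [LieAlgebra R L] :
    L →ₗ[R] L →ₗ[R] L :=
  LinearMap.mk₂ R (fun x y => ⁅x, y⁆) add_lie smul_lie lie_add lie_smul

/-- `ρ` makes the `R`-Lie algebra `L` into a Lie algebra in `H`-modules:
`ρ(h)⁅x, y⁆ = Σ ⁅ρ(h₍₁₎)(x), ρ(h₍₂₎)(y)⁆`. -/
def IsHLieAlgebra (R : Type*) {H L : Type*} [CommRing R] [Ring H] [Bialgebra R H]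
    [LieRing L] [LieAlgebra R L] (ρ : H →ₐ[R] Module.End R L) : Prop :=
  ∀ (h : H) (x y : L),
    ρ h ⁅x, y⁆ =
      TensorProduct.lift (lieBil R L)
        (legAct ρ ρ (Coalgebra.comul (R := R) h) (x ⊗ₜ[R] y))

/-- The twisted bracket `[x, y]_⋆ := Σ ⁅f̄ᵏ(x), f̄ₖ(y)⁆`, as a linear map on `L ⊗ L`. -/
def starBracket {R H L : Type*} [CommRing R] [Ring H] [Bialgebra R H]
    [LieRing L] [LieAlgebra R L] (ρ : H →ₐ[R] Module.End R L) (Finv : H ⊗[R] H) :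
    L ⊗[R] L →ₗ[R] L :=
  (TensorProduct.lift (lieBil R L)).comp (legAct ρ ρ Finv)

/-- The twisted pairing `⟨v, w⟩_⋆ := Σ b(f̄ᵏ(v), f̄ₖ(w))`, as a linear map on `V ⊗ V`. -/
def starPair {R H V : Type*} [CommRing R] [Ring H] [Bialgebra R H]
    [AddCommGroup V] [Module R V] (ρ : H →ₐ[R] Module.End R V)
    (b : V →ₗ[R] V →ₗ[R] R) (Finv : H ⊗[R] H) : V ⊗[R] V →ₗ[R] R :=
  (TensorProduct.lift b).comp (legAct ρ ρ Finv)

section MulAct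
variable {R : Type*} [CommRing R]
variable {A B M N : Type*} [Ring A] [Algebra R A] [Ring B] [Algebra R B]
  [AddCommGroup M] [Module R M] [AddCommGroup N] [Module R N]

/-- Generic two-leg action of `A ⊗ B` on `M ⊗ N`. -/
def tact (πM : A →ₗ[R] Module.End R M) (πN : B →ₗ[R] Module.End R N) :
    A ⊗[R] B →ₗ[R] (M ⊗[R] N →ₗ[R] M ⊗[R] N) :=
  (TensorProduct.homTensorHomMap (RingHom.id R) M N M N).comp (TensorProduct.map πM πN)

lemma tact_tmul (πM : A →ₗ[R] Module.End R M) (πN : B →ₗ[R] Module.End R N) (a : A) (b : B) :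
    tact πM πN (a ⊗ₜ[R] b) = TensorProduct.map (πM a) (πN b) := by
  simp [tact]

lemma tact_mul (πM : A →ₗ[R] Module.End R M) (πN : B →ₗ[R] Module.End R N)
    (hM : ∀ x y, πM (x * y) = πM x * πM y) (hN : ∀ x y, πN (x * y) = πN x * πN y)
    (X Y : A ⊗[R] B) :
    tact πM πN (X * Y) = (tact πM πN X).comp (tact πM πN Y) := by
  induction X using TensorProduct.induction_on with
  | zero => simp
  | tmul a b =>
    induction Y using TensorProduct.induction_on with
    | zero => simp
    | tmul c d =>
      rw [Algebra.TensorProduct.tmul_mul_tmul, tact_tmul, tact_tmul, tact_tmul, hM, hN,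
        Module.End.mul_eq_comp, Module.End.mul_eq_comp, TensorProduct.map_comp]
    | add Y₁ Y₂ ih1 ih2 =>
      rw [mul_add, map_add, map_add, ih1, ih2, LinearMap.comp_add]
  | add X₁ X₂ ih1 ih2 =>
    rw [add_mul, map_add, map_add, ih1, ih2, LinearMap.add_comp]

lemma tact_one (πM : A →ₗ[R] Module.End R M) (πN : B →ₗ[R] Module.End R N)
    (hM : πM 1 = 1) (hN : πN 1 = 1) : tact πM πN 1 = LinearMap.id := by
  rw [Algebra.TensorProduct.one_def, tact_tmul, hM, hN]
  simp [Module.End.one_eq_id]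

end MulAct
section AssocEq
variable (R H : Type*) [CommRing R] [Ring H] [Bialgebra R H]

lemma assoc_eq_algAssoc (x : (H ⊗[R] H) ⊗[R] H) :
    (TensorProduct.assoc R H H H) x = (Algebra.TensorProduct.assoc R R R H H H) x := by
  induction x using TensorProduct.induction_on with
  | zero => rw [LinearEquiv.map_zero, map_zero]
  | tmul y c =>
    induction y using TensorProduct.induction_on with
    | zero => rw [TensorProduct.zero_tmul, LinearEquiv.map_zero, map_zero]
    | tmul a b => rw [TensorProduct.assoc_tmul, Algebra.TensorProduct.assoc_tmul]
    | add y₁ y₂ ih1 ih2 =>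
      rw [TensorProduct.add_tmul, LinearEquiv.map_add, map_add, ih1, ih2]
  | add x₁ x₂ ih1 ih2 => rw [LinearEquiv.map_add, map_add, ih1, ih2]

lemma assocH_mul (Z W : (H ⊗[R] H) ⊗[R] H) :
    (TensorProduct.assoc R H H H) (Z * W) =
      (TensorProduct.assoc R H H H) Z * (TensorProduct.assoc R H H H) W := by
  rw [assoc_eq_algAssoc, assoc_eq_algAssoc, assoc_eq_algAssoc, map_mul]

end AssocEq


set_option maxHeartbeats 2000000 in
/-- For a Drinfel'd twist on a cocommutative bialgebra `H`, compatible
with an `H`-invariant bilinear form `b` on a Lie algebra `L` in `H`-modules that is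
cyclic with respect to the bracket, the twisted pairing is strictly cyclic with respect
to the twisted bracket: `⟨v₀, [v₁, v₂]_⋆⟩_⋆ = ⟨v₂, [v₀, v₁]_⋆⟩_⋆`. -/
theorem starPair_strictly_cyclic
    (R : Type*) [CommRing R] (H : Type*) [Ring H] [Bialgebra R H]
    (hcc : IsCocommutative R H)
    (L : Type*) [LieRing L] [LieAlgebra R L]
    (ρ : H →ₐ[R] Module.End R L) (hL : IsHLieAlgebra R ρ)
    (b : L →ₗ[R] L →ₗ[R] R)
    (hbinv : ∀ (h : H) (v w : L),
      TensorProduct.lift b (legAct ρ ρ (Coalgebra.comul (R := R) h) (v ⊗ₜ[R] w)) =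
        Coalgebra.counit (R := R) h * b v w)
    (hbcyc : ∀ v₀ v₁ v₂ : L, b v₀ ⁅v₁, v₂⁆ = b v₂ ⁅v₀, v₁⁆)
    (F Finv : H ⊗[R] H) (hF : IsDrinfeldTwist R F Finv)
    (hcompat : ∀ v w : L,
      starPair ρ b Finv (v ⊗ₜ[R] w) =
        starPair ρ b Finv (legAct ρ ρ (Rmat R F Finv) (v ⊗ₜ[R] w))) :
    ∀ v₀ v₁ v₂ : L,
      starPair ρ b Finv (v₀ ⊗ₜ[R] (starBracket ρ Finv (v₁ ⊗ₜ[R] v₂))) =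
        starPair ρ b Finv (v₂ ⊗ₜ[R] (starBracket ρ Finv (v₀ ⊗ₜ[R] v₁))) := by
  intro v₀ v₁ v₂
  obtain ⟨hFF, hFF', hcoc⟩ := hF
  -- multiplicativity of the leg actions
  have legAct_eq : legAct ρ ρ = tact ρ.toLinearMap ρ.toLinearMap := rfl
  have hρmul : ∀ x y : H, ρ.toLinearMap (x * y) = ρ.toLinearMap x * ρ.toLinearMap y :=
    fun x y => map_mul ρ x y
  have hlegmul : ∀ X Y : H ⊗[R] H,
      legAct ρ ρ (X * Y) = (legAct ρ ρ X).comp (legAct ρ ρ Y) := by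
    intro X Y; rw [legAct_eq]; exact tact_mul _ _ hρmul hρmul X Y
  have hlegmul' : ∀ X Y : H ⊗[R] H,
      legAct ρ ρ (X * Y) = legAct ρ ρ X * legAct ρ ρ Y := by
    intro X Y; rw [hlegmul, Module.End.mul_eq_comp]
  have hleg1 : legAct ρ ρ (1 : H ⊗[R] H) = LinearMap.id := by
    rw [legAct_eq]; exact tact_one _ _ (map_one ρ) (map_one ρ)
  -- bracket on pure tensors
  have brTmul : ∀ x y : L, TensorProduct.lift (lieBil R L) (x ⊗ₜ[R] y) = ⁅x, y⁆ := by
    intro x y; rw [TensorProduct.lift.tmul]; rfl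
  -- the bracket intertwines comultiplication action
  have brInt : ∀ (h : H) (u : L ⊗[R] L),
      ρ h (TensorProduct.lift (lieBil R L) u) =
        TensorProduct.lift (lieBil R L) (legAct ρ ρ (Coalgebra.comul (R := R) h) u) := by
    intro h u
    induction u using TensorProduct.induction_on with
    | zero => simp
    | tmul x y => rw [brTmul]; exact hL h x y
    | add u₁ u₂ ih1 ih2 => rw [map_add, map_add, map_add, map_add, ih1, ih2]
  -- I1 : pulling the bracket through a leg action
  have I1 : ∀ (X : H ⊗[R] H) (t : L ⊗[R] (L ⊗[R] L)),
      legAct ρ ρ X ((LinearMap.lTensor L (TensorProduct.lift (lieBil R L))) t) =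
        (LinearMap.lTensor L (TensorProduct.lift (lieBil R L)))
          (tact ρ.toLinearMap (legAct ρ ρ) (idTensorComul R H X) t) := by
    intro X
    induction X using TensorProduct.induction_on with
    | zero => intro t; simp
    | tmul a c =>
      intro t
      have hid : idTensorComul R H (a ⊗ₜ[R] c) = a ⊗ₜ[R] (Coalgebra.comul (R := R) c) := by
        simp [idTensorComul, Bialgebra.comulAlgHom_apply]
      rw [hid, tact_tmul]
      induction t using TensorProduct.induction_on with
      | zero => simp
      | tmul x u =>
        rw [LinearMap.lTensor_tmul, TensorProduct.map_tmul, LinearMap.lTensor_tmul,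
          ← brInt c u, legAct_eq, tact_tmul, TensorProduct.map_tmul]
        rfl
      | add t₁ t₂ ih1 ih2 => simp only [map_add, ih1, ih2]
    | add X₁ X₂ ih1 ih2 =>
      intro t
      simp only [map_add, LinearMap.add_apply, ih1 t, ih2 t]
  -- Q on pure tensors, using cyclicity
  have hQ : ∀ (u : L ⊗[R] L) (z : L),
      TensorProduct.lift b ((LinearMap.lTensor L (TensorProduct.lift (lieBil R L)))
          ((TensorProduct.assoc R L L L) (u ⊗ₜ[R] z))) =
        b z (TensorProduct.lift (lieBil R L) u) := by
    intro u z
    induction u using TensorProduct.induction_on with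
    | zero => simp
    | tmul x y =>
      rw [TensorProduct.assoc_tmul, LinearMap.lTensor_tmul, brTmul, TensorProduct.lift.tmul,
        brTmul, hbcyc x y z]
    | add u₁ u₂ ih1 ih2 =>
      rw [TensorProduct.add_tmul, LinearEquiv.map_add, map_add, map_add, ih1, ih2, map_add,
        map_add]
  -- key lemma: cyclicity + H-Lie property
  have key : ∀ (X : H ⊗[R] H) (t : (L ⊗[R] L) ⊗[R] L),
      TensorProduct.lift b ((LinearMap.lTensor L (TensorProduct.lift (lieBil R L)))
          ((TensorProduct.assoc R L L L)
            (tact (legAct ρ ρ) ρ.toLinearMap (comulTensorId R H X) t))) =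
        TensorProduct.lift b (legAct ρ ρ ((Algebra.TensorProduct.comm R H H) X)
          ((LinearMap.lTensor L (TensorProduct.lift (lieBil R L)))
            ((TensorProduct.comm R (L ⊗[R] L) L) t))) := by
    intro X
    induction X using TensorProduct.induction_on with
    | zero => intro t; simp
    | tmul a c =>
      intro t
      have h1 : comulTensorId R H (a ⊗ₜ[R] c) = (Coalgebra.comul (R := R) a) ⊗ₜ[R] c := by
        simp [comulTensorId, Bialgebra.comulAlgHom_apply]
      rw [h1, tact_tmul, Algebra.TensorProduct.comm_tmul]
      induction t using TensorProduct.induction_on with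
      | zero => simp
      | tmul u z =>
        rw [TensorProduct.map_tmul, hQ, ← brInt a u, TensorProduct.comm_tmul,
          LinearMap.lTensor_tmul, legAct_eq, tact_tmul, TensorProduct.map_tmul,
          TensorProduct.lift.tmul]
        rfl
      | add t₁ t₂ ih1 ih2 => simp only [map_add, LinearEquiv.map_add, ih1, ih2]
    | add X₁ X₂ ih1 ih2 =>
      intro t
      simp only [map_add, LinearMap.add_apply, LinearEquiv.map_add, ih1 t, ih2 t]
  -- compatibility of the two triple actions with the associator
  have acLem : ∀ (Z : (H ⊗[R] H) ⊗[R] H) (t : (L ⊗[R] L) ⊗[R] L),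
      tact ρ.toLinearMap (legAct ρ ρ) ((TensorProduct.assoc R H H H) Z)
          ((TensorProduct.assoc R L L L) t) =
        (TensorProduct.assoc R L L L) (tact (legAct ρ ρ) ρ.toLinearMap Z t) := by
    intro Z
    induction Z using TensorProduct.induction_on with
    | zero => intro t; simp
    | tmul W c =>
      induction W using TensorProduct.induction_on with
      | zero =>
        intro t
        simp [TensorProduct.zero_tmul]
      | tmul a bb =>
        intro t
        induction t using TensorProduct.induction_on with
        | zero => simp
        | tmul s z =>
          induction s using TensorProduct.induction_on with
          | zero => simp [TensorProduct.zero_tmul]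
          | tmul x y =>
            rw [TensorProduct.assoc_tmul, TensorProduct.assoc_tmul, tact_tmul, tact_tmul,
              legAct_eq, tact_tmul, tact_tmul, TensorProduct.map_tmul, TensorProduct.map_tmul,
              TensorProduct.map_tmul, TensorProduct.map_tmul, TensorProduct.assoc_tmul]
          | add s₁ s₂ ih1 ih2 =>
            simp only [TensorProduct.add_tmul, map_add, LinearEquiv.map_add, ih1, ih2]
        | add t₁ t₂ ih1 ih2 =>
          simp only [map_add, LinearEquiv.map_add, ih1, ih2]
      | add W₁ W₂ ih1 ih2 =>
        intro t
        simp only [TensorProduct.add_tmul, map_add, LinearMap.add_apply,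
          LinearEquiv.map_add, ih1 t, ih2 t]
    | add Z₁ Z₂ ih1 ih2 =>
      intro t
      simp only [map_add, LinearMap.add_apply, LinearEquiv.map_add, ih1 t, ih2 t]
  -- invertibility facts
  have hA : comulTensorId R H F * comulTensorId R H Finv = 1 := by
    rw [← map_mul, hFF, map_one]
  have hB : idTensorComul R H F * idTensorComul R H Finv = 1 := by
    rw [← map_mul, hFF, map_one]
  have hB' : idTensorComul R H Finv * idTensorComul R H F = 1 := by
    rw [← map_mul, hFF', map_one]
  have hP : (F ⊗ₜ[R] (1 : H)) * (Finv ⊗ₜ[R] (1 : H)) = 1 := by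
    rw [Algebra.TensorProduct.tmul_mul_tmul, hFF, mul_one]
    exact (Algebra.TensorProduct.one_def).symm
  have hQ1 : ((1 : H) ⊗ₜ[R] F) * ((1 : H) ⊗ₜ[R] Finv) = 1 := by
    rw [Algebra.TensorProduct.tmul_mul_tmul, hFF, mul_one]
    exact (Algebra.TensorProduct.one_def).symm
  have hQ1' : ((1 : H) ⊗ₜ[R] Finv) * ((1 : H) ⊗ₜ[R] F) = 1 := by
    rw [Algebra.TensorProduct.tmul_mul_tmul, hFF', mul_one]
    exact (Algebra.TensorProduct.one_def).symm
  have hα1 : (TensorProduct.assoc R H H H) (1 : (H ⊗[R] H) ⊗[R] H) = 1 := by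
    rw [assoc_eq_algAssoc, map_one]
  -- the 2-cocycle condition for Finv
  have hyx : (idTensorComul R H Finv * ((1 : H) ⊗ₜ[R] Finv)) *
      (((1 : H) ⊗ₜ[R] F) * idTensorComul R H F) = 1 := by
    rw [mul_assoc, ← mul_assoc ((1 : H) ⊗ₜ[R] Finv), hQ1', one_mul, hB']
  have hxy' : (((1 : H) ⊗ₜ[R] F) * idTensorComul R H F) *
      (TensorProduct.assoc R H H H) (comulTensorId R H Finv * (Finv ⊗ₜ[R] (1 : H))) = 1 := by
    rw [← hcoc, ← assocH_mul]
    have h2 : (F ⊗ₜ[R] (1 : H)) * comulTensorId R H F *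
        (comulTensorId R H Finv * (Finv ⊗ₜ[R] (1 : H))) = 1 := by
      rw [mul_assoc, ← mul_assoc (comulTensorId R H F), hA, one_mul, hP]
    rw [h2, hα1]
  have cocinv : idTensorComul R H Finv * ((1 : H) ⊗ₜ[R] Finv) =
      (TensorProduct.assoc R H H H) (comulTensorId R H Finv * (Finv ⊗ₜ[R] (1 : H))) := by
    calc idTensorComul R H Finv * ((1 : H) ⊗ₜ[R] Finv)
        = (idTensorComul R H Finv * ((1 : H) ⊗ₜ[R] Finv)) *
            ((((1 : H) ⊗ₜ[R] F) * idTensorComul R H F) *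
              (TensorProduct.assoc R H H H)
                (comulTensorId R H Finv * (Finv ⊗ₜ[R] (1 : H)))) := by
          rw [hxy', mul_one]
      _ = ((idTensorComul R H Finv * ((1 : H) ⊗ₜ[R] Finv)) *
            (((1 : H) ⊗ₜ[R] F) * idTensorComul R H F)) *
              (TensorProduct.assoc R H H H)
                (comulTensorId R H Finv * (Finv ⊗ₜ[R] (1 : H))) := (mul_assoc _ _ _).symm
      _ = (TensorProduct.assoc R H H H)
            (comulTensorId R H Finv * (Finv ⊗ₜ[R] (1 : H))) := by rw [hyx, one_mul]
  -- the compatibility hypothesis, extended by linearity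
  have hPall : ∀ u : L ⊗[R] L,
      starPair ρ b Finv u = starPair ρ b Finv (legAct ρ ρ (Rmat R F Finv) u) := by
    intro u
    induction u using TensorProduct.induction_on with
    | zero => simp
    | tmul v w => exact hcompat v w
    | add u₁ u₂ ih1 ih2 => rw [map_add, map_add, ih1, ih2, map_add]
  -- the flipped twist pairs like the twist itself
  have hfin : ∀ u : L ⊗[R] L,
      TensorProduct.lift b (legAct ρ ρ ((Algebra.TensorProduct.comm R H H) Finv) u) =
        starPair ρ b Finv u := by
    intro u
    have h2 : Rmat R F Finv * (F * (Algebra.TensorProduct.comm R H H) Finv) = 1 := by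
      rw [Rmat, mul_assoc, ← mul_assoc Finv, hFF', one_mul, ← map_mul, hFF, map_one]
    calc TensorProduct.lift b (legAct ρ ρ ((Algebra.TensorProduct.comm R H H) Finv) u)
        = TensorProduct.lift b (legAct ρ ρ
            (Finv * (F * (Algebra.TensorProduct.comm R H H) Finv)) u) := by
          rw [← mul_assoc, hFF', one_mul]
      _ = starPair ρ b Finv
            (legAct ρ ρ (F * (Algebra.TensorProduct.comm R H H) Finv) u) := by
          rw [hlegmul]; rfl
      _ = starPair ρ b Finv (legAct ρ ρ (Rmat R F Finv)
            (legAct ρ ρ (F * (Algebra.TensorProduct.comm R H H) Finv) u)) := hPall _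
      _ = starPair ρ b Finv (legAct ρ ρ
            (Rmat R F Finv * (F * (Algebra.TensorProduct.comm R H H) Finv)) u) := by
          rw [hlegmul (Rmat R F Finv) (F * (Algebra.TensorProduct.comm R H H) Finv)]; rfl
      _ = starPair ρ b Finv u := by rw [h2, hleg1]; rfl
  -- now the main computation
  have e1 : tact ρ.toLinearMap (legAct ρ ρ) ((1 : H) ⊗ₜ[R] Finv)
      (v₀ ⊗ₜ[R] (v₁ ⊗ₜ[R] v₂)) = v₀ ⊗ₜ[R] legAct ρ ρ Finv (v₁ ⊗ₜ[R] v₂) := by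
    rw [tact_tmul, TensorProduct.map_tmul]
    congr 1
    show ρ 1 v₀ = v₀
    rw [map_one]; rfl
  have e2 : tact (legAct ρ ρ) ρ.toLinearMap (Finv ⊗ₜ[R] (1 : H))
      ((v₀ ⊗ₜ[R] v₁) ⊗ₜ[R] v₂) = (legAct ρ ρ Finv (v₀ ⊗ₜ[R] v₁)) ⊗ₜ[R] v₂ := by
    rw [tact_tmul, TensorProduct.map_tmul]
    congr 1
    show ρ 1 v₂ = v₂
    rw [map_one]; rfl
  have tactmul3' := tact_mul ρ.toLinearMap (legAct ρ ρ) hρmul hlegmul'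
  have tactmul3 := tact_mul (legAct ρ ρ) ρ.toLinearMap hlegmul' hρmul
  calc starPair ρ b Finv (v₀ ⊗ₜ[R] (starBracket ρ Finv (v₁ ⊗ₜ[R] v₂)))
      = TensorProduct.lift b (legAct ρ ρ Finv
          ((LinearMap.lTensor L (TensorProduct.lift (lieBil R L)))
            (v₀ ⊗ₜ[R] legAct ρ ρ Finv (v₁ ⊗ₜ[R] v₂)))) := by
        rw [LinearMap.lTensor_tmul]; rfl
    _ = TensorProduct.lift b ((LinearMap.lTensor L (TensorProduct.lift (lieBil R L)))
          (tact ρ.toLinearMap (legAct ρ ρ) (idTensorComul R H Finv)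
            (v₀ ⊗ₜ[R] legAct ρ ρ Finv (v₁ ⊗ₜ[R] v₂)))) := by rw [I1]
    _ = TensorProduct.lift b ((LinearMap.lTensor L (TensorProduct.lift (lieBil R L)))
          (tact ρ.toLinearMap (legAct ρ ρ) (idTensorComul R H Finv * ((1 : H) ⊗ₜ[R] Finv))
            (v₀ ⊗ₜ[R] (v₁ ⊗ₜ[R] v₂)))) := by rw [tactmul3', LinearMap.comp_apply, e1]
    _ = TensorProduct.lift b ((LinearMap.lTensor L (TensorProduct.lift (lieBil R L)))
          (tact ρ.toLinearMap (legAct ρ ρ)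
            ((TensorProduct.assoc R H H H) (comulTensorId R H Finv * (Finv ⊗ₜ[R] (1 : H))))
            ((TensorProduct.assoc R L L L) ((v₀ ⊗ₜ[R] v₁) ⊗ₜ[R] v₂)))) := by
        rw [cocinv, TensorProduct.assoc_tmul]
    _ = TensorProduct.lift b ((LinearMap.lTensor L (TensorProduct.lift (lieBil R L)))
          ((TensorProduct.assoc R L L L)
            (tact (legAct ρ ρ) ρ.toLinearMap (comulTensorId R H Finv)
              (legAct ρ ρ Finv (v₀ ⊗ₜ[R] v₁) ⊗ₜ[R] v₂)))) := by
        rw [acLem, tactmul3, LinearMap.comp_apply, e2]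
    _ = TensorProduct.lift b (legAct ρ ρ ((Algebra.TensorProduct.comm R H H) Finv)
          ((LinearMap.lTensor L (TensorProduct.lift (lieBil R L)))
            ((TensorProduct.comm R (L ⊗[R] L) L)
              (legAct ρ ρ Finv (v₀ ⊗ₜ[R] v₁) ⊗ₜ[R] v₂)))) := key _ _
    _ = TensorProduct.lift b (legAct ρ ρ ((Algebra.TensorProduct.comm R H H) Finv)
          (v₂ ⊗ₜ[R] (TensorProduct.lift (lieBil R L) (legAct ρ ρ Finv (v₀ ⊗ₜ[R] v₁))))) := by
        rw [TensorProduct.comm_tmul, LinearMap.lTensor_tmul]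
    _ = starPair ρ b Finv (v₂ ⊗ₜ[R] (starBracket ρ Finv (v₀ ⊗ₜ[R] v₁))) := hfin _
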